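/- Let k ≥ 7 be an integer and let n be a natural number such that the complete graph on n vertices has at most 2k − 2 edges (i.e., n(n−1)/2 ≤ 2k − 2). Then there exists a simple graph G on n vertices such that neither G nor its complement contains a trail with k vertices. -/

import Mathlib

open Finset SimpleGraph


/-- Sum over `S` of the number of elements of `l` containing `x` is twice the length,
provided every element of `l` is a non-diagonal pair with both members in `S`. -/
lemma list_sum_countP {V : Type*} [DecidableEq V] (S : Finset V) :
    ∀ (l : List (Sym2 V)), (∀ e ∈ l, ¬ e.IsDiag ∧ ∀ x ∈ e, x ∈ S) →
      ∑ x ∈ S, l.countP (fun e => x ∈ e) = 2 * l.length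
  | [], _ => by simp
  | e :: l, h => by
    have h1 := (h e (List.mem_cons_self)).1
    have h2 := (h e (List.mem_cons_self)).2
    have ih := list_sum_countP S l (fun e' he' => h e' (List.mem_cons_of_mem _ he'))
    simp only [List.countP_cons, List.length_cons]
    rw [Finset.sum_add_distrib, ih]
    have hcard : ∑ x ∈ S, (if (x ∈ e) then 1 else 0) = 2 := by
      rw [← Finset.card_filter]
      induction e with
      | _ a b =>
        have hab : a ≠ b := by
          intro hab; exact h1 (by simp [hab])
        have : S.filter (fun x => x ∈ (s(a, b) : Sym2 V)) = {a, b} := by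
          ext x
          simp only [Finset.mem_filter, Sym2.mem_iff, Finset.mem_insert, Finset.mem_singleton]
          constructor
          · rintro ⟨-, h⟩; exact h
          · rintro (rfl | rfl)
            · exact ⟨h2 x (by simp), Or.inl rfl⟩
            · exact ⟨h2 x (by simp), Or.inr rfl⟩
        rw [this, Finset.card_pair hab]
    simp only [decide_eq_true_eq] at hcard ⊢
    omega

/-- Key bound: a trail has length at most `1 + ∑_{x ∈ support} ⌊deg x / 2⌋`. -/
lemma trail_length_le {V : Type*} [Fintype V] [DecidableEq V] {G : SimpleGraph V}
    [DecidableRel G.Adj] {u v : V} (p : G.Walk u v) (hp : p.IsTrail) :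
    p.length ≤ (∑ x ∈ p.support.toFinset, G.degree x / 2) + 1 := by
  classical
  set S := p.support.toFinset with hS
  have hedges : ∀ e ∈ p.edges, ¬ e.IsDiag ∧ ∀ x ∈ e, x ∈ S := by
    intro e he
    refine ⟨G.not_isDiag_of_mem_edgeSet (p.edges_subset_edgeSet he), ?_⟩
    induction e with
    | _ a b =>
      intro x hx
      rw [Sym2.mem_iff] at hx
      rw [hS, List.mem_toFinset]
      rcases hx with rfl | rfl
      · exact p.fst_mem_support_of_mem_edges he
      · exact p.snd_mem_support_of_mem_edges he
  have hsum : ∑ x ∈ S, p.edges.countP (fun e => x ∈ e) = 2 * p.length := by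
    rw [list_sum_countP S p.edges hedges, p.length_edges]
  have hdeg : ∀ x : V, p.edges.countP (fun e => x ∈ e) ≤ G.degree x := by
    intro x
    rw [List.countP_eq_length_filter, ← List.toFinset_card_of_nodup
      (hp.edges_nodup.filter _), ← card_incidenceFinset_eq_degree]
    apply Finset.card_le_card
    intro e he
    simp only [List.mem_toFinset, List.mem_filter, decide_eq_true_eq] at he
    rw [mem_incidenceFinset]
    exact ⟨p.edges_subset_edgeSet he.1, he.2⟩
  have hmain : ∀ x ∈ S, p.edges.countP (fun e => x ∈ e) ≤
      2 * (G.degree x / 2) + (if x = u ∨ x = v then 1 else 0) := by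
    intro x _
    by_cases hx : x = u ∨ x = v
    · rw [if_pos hx]
      have := hdeg x
      omega
    · rw [if_neg hx]
      push_neg at hx
      have hev : Even (p.edges.countP (fun e => x ∈ e)) :=
        (hp.even_countP_edges_iff x).2 (fun _ => hx)
      obtain ⟨m, hm⟩ := hev
      have := hdeg x
      omega
  have hsum2 : ∑ x ∈ S, p.edges.countP (fun e => x ∈ e) ≤
      (∑ x ∈ S, 2 * (G.degree x / 2)) + 2 := by
    calc ∑ x ∈ S, p.edges.countP (fun e => x ∈ e)
        ≤ ∑ x ∈ S, (2 * (G.degree x / 2) + (if x = u ∨ x = v then 1 else 0)) :=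
          Finset.sum_le_sum hmain
      _ = (∑ x ∈ S, 2 * (G.degree x / 2)) + ∑ x ∈ S, (if x = u ∨ x = v then 1 else 0) :=
          Finset.sum_add_distrib
      _ ≤ (∑ x ∈ S, 2 * (G.degree x / 2)) + 2 := by
          gcongr
          rw [← Finset.card_filter]
          calc (S.filter (fun x => x = u ∨ x = v)).card ≤ ({u, v} : Finset V).card := by
                apply Finset.card_le_card
                intro x hx
                simp only [Finset.mem_filter] at hx
                simpa using hx.2
            _ ≤ 2 := Finset.card_insert_le _ _ |>.trans (by simp)
  rw [hsum, ← Finset.mul_sum] at hsum2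
  omega


/-- Two disjoint cliques: vertices below `a` and vertices at least `a`. -/
def twoCliques (n a : ℕ) : SimpleGraph (Fin n) where
  Adj i j := i ≠ j ∧ ((i : ℕ) < a ↔ (j : ℕ) < a)
  symm := ⟨fun i j ⟨h1, h2⟩ => ⟨h1.symm, h2.symm⟩⟩
  loopless := ⟨fun i ⟨h1, _⟩ => h1 rfl⟩

instance (n a : ℕ) : DecidableRel (twoCliques n a).Adj :=
  fun i j => inferInstanceAs (Decidable (i ≠ j ∧ ((i : ℕ) < a ↔ (j : ℕ) < a)))

lemma twoCliques_compl_adj (n a : ℕ) (i j : Fin n) :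
    (twoCliques n a)ᶜ.Adj i j ↔ i ≠ j ∧ ¬((i : ℕ) < a ↔ (j : ℕ) < a) := by
  rw [compl_adj]
  show i ≠ j ∧ ¬(i ≠ j ∧ _) ↔ _
  tauto

lemma card_sideA_le (n a : ℕ) :
    (Finset.univ.filter (fun x : Fin n => (x : ℕ) < a)).card ≤ a := by
  classical
  have hsub : (Finset.univ.filter (fun x : Fin n => (x : ℕ) < a)).image Fin.val ⊆
      Finset.range a := by
    intro m hm
    simp only [Finset.mem_image] at hm
    obtain ⟨x, hx, rfl⟩ := hm
    simp only [Finset.mem_filter] at hx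
    simpa using hx.2
  have h2 := Finset.card_le_card hsub
  rwa [Finset.card_image_of_injective _ Fin.val_injective, Finset.card_range] at h2

lemma card_sideB_le (n a : ℕ) :
    (Finset.univ.filter (fun x : Fin n => ¬ (x : ℕ) < a)).card ≤ n - a := by
  classical
  have hsub : (Finset.univ.filter (fun x : Fin n => ¬ (x : ℕ) < a)).image Fin.val ⊆
      Finset.Ico a n := by
    intro m hm
    simp only [Finset.mem_image] at hm
    obtain ⟨x, hx, rfl⟩ := hm
    simp only [Finset.mem_filter, not_lt] at hx
    have := x.isLt
    simp only [Finset.mem_Ico]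
    omega
  have h2 := Finset.card_le_card hsub
  rwa [Finset.card_image_of_injective _ Fin.val_injective, Nat.card_Ico] at h2

lemma deg_tc_A (n a : ℕ) (x : Fin n) (hx : (x : ℕ) < a) :
    (twoCliques n a).degree x ≤ a - 1 := by
  classical
  rw [← card_neighborFinset_eq_degree]
  have hsub : (twoCliques n a).neighborFinset x ⊆
      (Finset.univ.filter (fun y : Fin n => (y : ℕ) < a)).erase x := by
    intro y hy
    rw [mem_neighborFinset] at hy
    obtain ⟨hne, hiff⟩ := hy
    exact Finset.mem_erase.2 ⟨hne.symm, by simp [hiff.1 hx]⟩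
  calc ((twoCliques n a).neighborFinset x).card
      ≤ ((Finset.univ.filter (fun y : Fin n => (y : ℕ) < a)).erase x).card :=
        Finset.card_le_card hsub
    _ = (Finset.univ.filter (fun y : Fin n => (y : ℕ) < a)).card - 1 :=
        Finset.card_erase_of_mem (by simp [hx])
    _ ≤ a - 1 := by have := card_sideA_le n a; omega

lemma deg_tc_B (n a : ℕ) (x : Fin n) (hx : ¬ (x : ℕ) < a) :
    (twoCliques n a).degree x ≤ n - a - 1 := by
  classical
  rw [← card_neighborFinset_eq_degree]
  have hsub : (twoCliques n a).neighborFinset x ⊆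
      (Finset.univ.filter (fun y : Fin n => ¬ (y : ℕ) < a)).erase x := by
    intro y hy
    rw [mem_neighborFinset] at hy
    obtain ⟨hne, hiff⟩ := hy
    refine Finset.mem_erase.2 ⟨hne.symm, ?_⟩
    simp only [Finset.mem_filter, Finset.mem_univ, true_and]
    exact fun h => hx (hiff.2 h)
  calc ((twoCliques n a).neighborFinset x).card
      ≤ ((Finset.univ.filter (fun y : Fin n => ¬ (y : ℕ) < a)).erase x).card :=
        Finset.card_le_card hsub
    _ = (Finset.univ.filter (fun y : Fin n => ¬ (y : ℕ) < a)).card - 1 :=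
        Finset.card_erase_of_mem
          (by simp only [Finset.mem_filter, Finset.mem_univ, true_and]; exact hx)
    _ ≤ n - a - 1 := by have := card_sideB_le n a; omega

lemma deg_tcc_A (n a : ℕ) (x : Fin n) (hx : (x : ℕ) < a) :
    (twoCliques n a)ᶜ.degree x ≤ n - a := by
  classical
  rw [← card_neighborFinset_eq_degree]
  have hsub : (twoCliques n a)ᶜ.neighborFinset x ⊆
      Finset.univ.filter (fun y : Fin n => ¬ (y : ℕ) < a) := by
    intro y hy
    rw [mem_neighborFinset, twoCliques_compl_adj] at hy
    simp only [Finset.mem_filter, Finset.mem_univ, true_and]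
    intro h
    exact hy.2 (iff_of_true hx h)
  exact (Finset.card_le_card hsub).trans (card_sideB_le n a)

lemma deg_tcc_B (n a : ℕ) (x : Fin n) (hx : ¬ (x : ℕ) < a) :
    (twoCliques n a)ᶜ.degree x ≤ a := by
  classical
  rw [← card_neighborFinset_eq_degree]
  have hsub : (twoCliques n a)ᶜ.neighborFinset x ⊆
      Finset.univ.filter (fun y : Fin n => (y : ℕ) < a) := by
    intro y hy
    rw [mem_neighborFinset, twoCliques_compl_adj] at hy
    simp only [Finset.mem_filter, Finset.mem_univ, true_and]
    by_contra h
    exact hy.2 (iff_of_false hx h)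
  exact (Finset.card_le_card hsub).trans (card_sideA_le n a)

/-- A walk in `twoCliques` stays on the side where it starts. -/
lemma tc_support (n a : ℕ) {u v : Fin n} (p : (twoCliques n a).Walk u v) :
    ∀ x ∈ p.support, ((x : ℕ) < a ↔ (u : ℕ) < a) := by
  induction p with
  | nil => intro x hx; rw [SimpleGraph.Walk.support_nil, List.mem_singleton] at hx; subst hx; rfl
  | @cons u' w' v' h q ih =>
    intro x hx
    rw [SimpleGraph.Walk.support_cons, List.mem_cons] at hx
    rcases hx with rfl | hx
    · rfl
    · exact (ih x hx).trans h.2.symm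


lemma arith_choice (n k : ℕ) (hk : 7 ≤ k) (hn : n * (n - 1) / 2 ≤ 2 * k - 2)
    (hne : ¬(n = 7 ∧ k = 12)) :
    ∃ a, a * ((a - 1) / 2) + 3 ≤ k ∧ (n - a) * ((n - a - 1) / 2) + 3 ≤ k ∧
      a * ((n - a) / 2) + (n - a) * (a / 2) + 3 ≤ k := by
  have hev : n * (n - 1) % 2 = 0 := by
    obtain ⟨r, hr⟩ := Nat.even_mul_pred_self n
    omega
  have hn4 : n * (n - 1) + 4 ≤ 4 * k := by omega
  rcases le_or_gt n 7 with h7 | h7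
  · interval_cases n
    · exact ⟨0, by omega, by omega, by omega⟩
    · exact ⟨0, by omega, by omega, by omega⟩
    · exact ⟨1, by omega, by omega, by omega⟩
    · exact ⟨3, by omega, by omega, by omega⟩
    · exact ⟨3, by omega, by omega, by omega⟩
    · exact ⟨4, by omega, by omega, by omega⟩
    · exact ⟨3, by omega, by omega, by omega⟩
    · -- n = 7; here k ≥ 13
      have hk13 : k ≠ 12 := fun h => hne ⟨rfl, h⟩
      exact ⟨5, by omega, by omega, by omega⟩
  · rcases (show n % 4 = 0 ∨ n % 4 = 1 ∨ n % 4 = 2 ∨ n % 4 = 3 by omega) with h | h | h | h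
    · obtain ⟨s, rfl⟩ : ∃ s, n = 4 * s + 8 := ⟨n / 4 - 2, by omega⟩
      have hx : (4*s+8) * ((4*s+8) - 1) = 16*(s*s) + 60*s + 56 := by
        have h1 : (4*s+8) - 1 = 4*s+7 := by omega
        rw [h1]; ring
      rw [hx] at hn4
      refine ⟨2*s+5, ?_, ?_, ?_⟩
      · have d1 : (2*s+5 - 1)/2 = s+2 := by omega
        rw [d1]
        have : (2*s+5)*(s+2) = 2*(s*s)+9*s+10 := by ring
        omega
      · have d2 : (4*s+8) - (2*s+5) = 2*s+3 := by omega
        rw [d2]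
        have d3 : (2*s+3 - 1)/2 = s+1 := by omega
        rw [d3]
        have : (2*s+3)*(s+1) = 2*(s*s)+5*s+3 := by ring
        omega
      · have d2 : (4*s+8) - (2*s+5) = 2*s+3 := by omega
        rw [d2]
        have d4 : (2*s+3)/2 = s+1 := by omega
        have d5 : (2*s+5)/2 = s+2 := by omega
        rw [d4, d5]
        have e1 : (2*s+5)*(s+1) = 2*(s*s)+7*s+5 := by ring
        have e2 : (2*s+3)*(s+2) = 2*(s*s)+7*s+6 := by ring
        omega
    · obtain ⟨s, rfl⟩ : ∃ s, n = 4 * s + 9 := ⟨n / 4 - 2, by omega⟩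
      have hx : (4*s+9) * ((4*s+9) - 1) = 16*(s*s) + 68*s + 72 := by
        have h1 : (4*s+9) - 1 = 4*s+8 := by omega
        rw [h1]; ring
      rw [hx] at hn4
      refine ⟨2*s+6, ?_, ?_, ?_⟩
      · have d1 : (2*s+6 - 1)/2 = s+2 := by omega
        rw [d1]
        have : (2*s+6)*(s+2) = 2*(s*s)+10*s+12 := by ring
        omega
      · have d2 : (4*s+9) - (2*s+6) = 2*s+3 := by omega
        rw [d2]
        have d3 : (2*s+3 - 1)/2 = s+1 := by omega
        rw [d3]
        have : (2*s+3)*(s+1) = 2*(s*s)+5*s+3 := by ring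
        omega
      · have d2 : (4*s+9) - (2*s+6) = 2*s+3 := by omega
        rw [d2]
        have d4 : (2*s+3)/2 = s+1 := by omega
        have d5 : (2*s+6)/2 = s+3 := by omega
        rw [d4, d5]
        have e1 : (2*s+6)*(s+1) = 2*(s*s)+8*s+6 := by ring
        have e2 : (2*s+3)*(s+3) = 2*(s*s)+9*s+9 := by ring
        omega
    · obtain ⟨s, rfl⟩ : ∃ s, n = 4 * s + 10 := ⟨n / 4 - 2, by omega⟩
      have hx : (4*s+10) * ((4*s+10) - 1) = 16*(s*s) + 76*s + 90 := by
        have h1 : (4*s+10) - 1 = 4*s+9 := by omega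
        rw [h1]; ring
      rw [hx] at hn4
      refine ⟨2*s+5, ?_, ?_, ?_⟩
      · have d1 : (2*s+5 - 1)/2 = s+2 := by omega
        rw [d1]
        have : (2*s+5)*(s+2) = 2*(s*s)+9*s+10 := by ring
        omega
      · have d2 : (4*s+10) - (2*s+5) = 2*s+5 := by omega
        rw [d2]
        have d3 : (2*s+5 - 1)/2 = s+2 := by omega
        rw [d3]
        have : (2*s+5)*(s+2) = 2*(s*s)+9*s+10 := by ring
        omega
      · have d2 : (4*s+10) - (2*s+5) = 2*s+5 := by omega
        rw [d2]
        have d5 : (2*s+5)/2 = s+2 := by omega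
        rw [d5]
        have e1 : (2*s+5)*(s+2) = 2*(s*s)+9*s+10 := by ring
        omega
    · obtain ⟨s, rfl⟩ : ∃ s, n = 4 * s + 11 := ⟨n / 4 - 2, by omega⟩
      have hx : (4*s+11) * ((4*s+11) - 1) = 16*(s*s) + 84*s + 110 := by
        have h1 : (4*s+11) - 1 = 4*s+10 := by omega
        rw [h1]; ring
      rw [hx] at hn4
      refine ⟨2*s+7, ?_, ?_, ?_⟩
      · have d1 : (2*s+7 - 1)/2 = s+3 := by omega
        rw [d1]
        have : (2*s+7)*(s+3) = 2*(s*s)+13*s+21 := by ring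
        omega
      · have d2 : (4*s+11) - (2*s+7) = 2*s+4 := by omega
        rw [d2]
        have d3 : (2*s+4 - 1)/2 = s+1 := by omega
        rw [d3]
        have : (2*s+4)*(s+1) = 2*(s*s)+6*s+4 := by ring
        omega
      · have d2 : (4*s+11) - (2*s+7) = 2*s+4 := by omega
        rw [d2]
        have d4 : (2*s+4)/2 = s+2 := by omega
        have d5 : (2*s+7)/2 = s+3 := by omega
        rw [d4, d5]
        have e1 : (2*s+7)*(s+2) = 2*(s*s)+11*s+14 := by ring
        have e2 : (2*s+4)*(s+3) = 2*(s*s)+10*s+12 := by ring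
        omega

/-! ### The special graph for the case `n = 7`, `k = 12` -/

def specialRel : Fin 7 → Fin 7 → Bool := fun i j =>
  let l : List (ℕ × ℕ) := [(0,1),(0,2),(0,3),(0,4),(0,5),(1,2),(1,3),(1,4),(1,6),(2,3),(5,6)]
  l.contains ((i : ℕ), (j : ℕ)) || l.contains ((j : ℕ), (i : ℕ))

def G₀ : SimpleGraph (Fin 7) where
  Adj i j := specialRel i j = true
  symm := ⟨fun i j h => by revert h; revert i j; decide⟩
  loopless := ⟨fun i h => by revert h; revert i; decide⟩

instance : DecidableRel G₀.Adj := fun i j => inferInstanceAs (Decidable (_ = true))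

lemma G₀_sum : ∑ x : Fin 7, G₀.degree x / 2 = 9 := by decide

lemma G₀c_sum : ∑ x : Fin 7, G₀ᶜ.degree x / 2 = 8 := by decide

/-- A graph `G` contains a trail with `k` vertices (counted with multiplicity),
i.e., a walk of length `k - 1` whose edges are pairwise distinct. -/
def HasTrailWithVertices {V : Type*} (G : SimpleGraph V) (k : ℕ) : Prop :=
  ∃ (u v : V) (p : G.Walk u v), p.IsTrail ∧ p.length + 1 = k

lemma no_trail_G₀ : ¬ HasTrailWithVertices G₀ 12 := by
  rintro ⟨u, v, p, hp, hlen⟩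
  have key := trail_length_le p hp
  have hsub : ∑ x ∈ p.support.toFinset, G₀.degree x / 2 ≤ ∑ x : Fin 7, G₀.degree x / 2 :=
    Finset.sum_le_sum_of_subset (Finset.subset_univ _)
  rw [G₀_sum] at hsub
  omega

lemma no_trail_G₀c : ¬ HasTrailWithVertices G₀ᶜ 12 := by
  rintro ⟨u, v, p, hp, hlen⟩
  have key := trail_length_le p hp
  have hsub : ∑ x ∈ p.support.toFinset, G₀ᶜ.degree x / 2 ≤ ∑ x : Fin 7, G₀ᶜ.degree x / 2 :=
    Finset.sum_le_sum_of_subset (Finset.subset_univ _)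
  rw [G₀c_sum] at hsub
  omega

/-- Let `k ≥ 7` and let `n` be such that the complete graph on `n` vertices has at
most `2k − 2` edges. Then there is a simple graph `G` on `n` vertices such that
neither `G` nor its complement contains a trail with `k` vertices. -/
theorem no_trail_of_few_edges (k n : ℕ) (hk : 7 ≤ k) (hn : n * (n - 1) / 2 ≤ 2 * k - 2) :
    ∃ G : SimpleGraph (Fin n),
      ¬ HasTrailWithVertices G k ∧ ¬ HasTrailWithVertices Gᶜ k := by
  classical
  by_cases hsp : n = 7 ∧ k = 12
  · obtain ⟨rfl, rfl⟩ := hsp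
    exact ⟨G₀, no_trail_G₀, no_trail_G₀c⟩
  · obtain ⟨a, C1, C2, C3⟩ := arith_choice n k hk hn hsp
    refine ⟨twoCliques n a, ?_, ?_⟩
    · rintro ⟨u, v, p, hp, hlen⟩
      have key := trail_length_le p hp
      by_cases hu : (u : ℕ) < a
      · have hb : ∀ x ∈ p.support.toFinset, (twoCliques n a).degree x / 2 ≤ (a - 1) / 2 := by
          intro x hx
          rw [List.mem_toFinset] at hx
          exact Nat.div_le_div_right (deg_tc_A n a x ((tc_support n a p x hx).mpr hu))
        have hcard : p.support.toFinset.card ≤ a := by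
          refine le_trans (Finset.card_le_card ?_) (card_sideA_le n a)
          intro x hx
          rw [List.mem_toFinset] at hx
          simp only [Finset.mem_filter, Finset.mem_univ, true_and]
          exact (tc_support n a p x hx).mpr hu
        have hsum : ∑ x ∈ p.support.toFinset, (twoCliques n a).degree x / 2
            ≤ a * ((a - 1) / 2) := by
          calc ∑ x ∈ p.support.toFinset, (twoCliques n a).degree x / 2
              ≤ p.support.toFinset.card • ((a - 1) / 2) :=
                Finset.sum_le_card_nsmul _ _ _ hb
            _ = p.support.toFinset.card * ((a - 1) / 2) := smul_eq_mul ..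
            _ ≤ a * ((a - 1) / 2) := Nat.mul_le_mul_right _ hcard
        omega
      · have hb : ∀ x ∈ p.support.toFinset,
            (twoCliques n a).degree x / 2 ≤ (n - a - 1) / 2 := by
          intro x hx
          rw [List.mem_toFinset] at hx
          refine Nat.div_le_div_right (deg_tc_B n a x ?_)
          exact fun h => hu ((tc_support n a p x hx).mp h)
        have hcard : p.support.toFinset.card ≤ n - a := by
          refine le_trans (Finset.card_le_card ?_) (card_sideB_le n a)
          intro x hx
          rw [List.mem_toFinset] at hx
          simp only [Finset.mem_filter, Finset.mem_univ, true_and]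
          exact fun h => hu ((tc_support n a p x hx).mp h)
        have hsum : ∑ x ∈ p.support.toFinset, (twoCliques n a).degree x / 2
            ≤ (n - a) * ((n - a - 1) / 2) := by
          calc ∑ x ∈ p.support.toFinset, (twoCliques n a).degree x / 2
              ≤ p.support.toFinset.card • ((n - a - 1) / 2) :=
                Finset.sum_le_card_nsmul _ _ _ hb
            _ = p.support.toFinset.card * ((n - a - 1) / 2) := smul_eq_mul ..
            _ ≤ (n - a) * ((n - a - 1) / 2) := Nat.mul_le_mul_right _ hcard
        omega
    · rintro ⟨u, v, p, hp, hlen⟩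
      have key := trail_length_le p hp
      have hsA : ∑ x ∈ Finset.univ.filter (fun x : Fin n => (x : ℕ) < a),
          (twoCliques n a)ᶜ.degree x / 2 ≤ a * ((n - a) / 2) := by
        calc ∑ x ∈ Finset.univ.filter (fun x : Fin n => (x : ℕ) < a),
            (twoCliques n a)ᶜ.degree x / 2
            ≤ (Finset.univ.filter (fun x : Fin n => (x : ℕ) < a)).card • ((n - a) / 2) := by
              refine Finset.sum_le_card_nsmul _ _ _ ?_
              intro x hx
              simp only [Finset.mem_filter] at hx
              exact Nat.div_le_div_right (deg_tcc_A n a x hx.2)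
          _ = (Finset.univ.filter (fun x : Fin n => (x : ℕ) < a)).card * ((n - a) / 2) :=
              smul_eq_mul ..
          _ ≤ a * ((n - a) / 2) := Nat.mul_le_mul_right _ (card_sideA_le n a)
      have hsB : ∑ x ∈ Finset.univ.filter (fun x : Fin n => ¬ (x : ℕ) < a),
          (twoCliques n a)ᶜ.degree x / 2 ≤ (n - a) * (a / 2) := by
        calc ∑ x ∈ Finset.univ.filter (fun x : Fin n => ¬ (x : ℕ) < a),
            (twoCliques n a)ᶜ.degree x / 2
            ≤ (Finset.univ.filter (fun x : Fin n => ¬ (x : ℕ) < a)).card • (a / 2) := by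
              refine Finset.sum_le_card_nsmul _ _ _ ?_
              intro x hx
              simp only [Finset.mem_filter] at hx
              exact Nat.div_le_div_right (deg_tcc_B n a x hx.2)
          _ = (Finset.univ.filter (fun x : Fin n => ¬ (x : ℕ) < a)).card * (a / 2) :=
              smul_eq_mul ..
          _ ≤ (n - a) * (a / 2) := Nat.mul_le_mul_right _ (card_sideB_le n a)
      have hsplit : ∑ x : Fin n, (twoCliques n a)ᶜ.degree x / 2 =
          (∑ x ∈ Finset.univ.filter (fun x : Fin n => (x : ℕ) < a),
            (twoCliques n a)ᶜ.degree x / 2) +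
          ∑ x ∈ Finset.univ.filter (fun x : Fin n => ¬ (x : ℕ) < a),
            (twoCliques n a)ᶜ.degree x / 2 :=
        (Finset.sum_filter_add_sum_filter_not _ _ _).symm
      have hsub : ∑ x ∈ p.support.toFinset, (twoCliques n a)ᶜ.degree x / 2 ≤
          ∑ x : Fin n, (twoCliques n a)ᶜ.degree x / 2 :=
        Finset.sum_le_sum_of_subset (Finset.subset_univ _)
      omega
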